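/- Let p, q : [0, ∞) → ℂ be measurable and integrable on every finite interval [0, a], and let λ, α ∈ ℂ. Then there exists a unique continuous function φ = (φ₁, φ₂) : [0, ∞) → ℂ² satisfying the integral equation φ(x) = (sin α, −cos α) + ∫₀ˣ A(s, λ) φ(s) ds for all x ≥ 0; this φ is absolutely continuous on every finite interval and satisfies B φ′ + Ω φ = λ φ almost everywhere with φ(0) = (sin α, −cos α). Moreover, for every fixed x ≥ 0, each component φ₁(x, λ, α) and φ₂(x, λ, α) is an entire (analytic) function of the pair (λ, α) ∈ ℂ². -/

import Mathlib

open MeasureTheory Filter Set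

noncomputable section

open intervalIntegral

/-- The matrix `B` with rows `(0, 1)` and `(-1, 0)`. -/
def BmatC : Matrix (Fin 2) (Fin 2) ℂ := !![0, 1; -1, 0]

/-- The potential matrix `Ω(x)` with rows `(p x, q x)` and `(q x, -p x)`. -/
def OmegaC (p q : ℝ → ℂ) (x : ℝ) : Matrix (Fin 2) (Fin 2) ℂ := !![p x, q x; q x, -p x]

/-- The matrix `A(x, λ)` with rows `(q x, -p x - λ)` and `(λ - p x, -q x)`,
so that the canonical Dirac system `B y' + Ω y = λ y` reads `y' = A(x, λ) y`. -/
def AmatC (p q : ℝ → ℂ) (lam : ℂ) (x : ℝ) : Matrix (Fin 2) (Fin 2) ℂ :=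
  !![q x, -p x - lam; lam - p x, -q x]



lemma pow_lb {a b : ℝ} (h0 : 0 ≤ b) (hba : b ≤ a) (n : ℕ) :
    ((n:ℝ)+1) * b^n * (a-b) ≤ a^(n+1) - b^(n+1) := by
  induction n with
  | zero => simp
  | succ m ih =>
    have h2 : 0 ≤ a - b := by linarith
    have h3 : (0:ℝ) ≤ b^m := by positivity
    have hb : b^(m+1) ≤ a * b^m := by
      calc b^(m+1) = b * b^m := by ring
      _ ≤ a * b^m := mul_le_mul_of_nonneg_right hba h3
    have e1 : a^(m+1+1) - b^(m+1+1) = a * (a^(m+1) - b^(m+1)) + (a-b) * b^(m+1) := by ring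
    have e2 := mul_le_mul_of_nonneg_left ih (h0.trans hba)
    have e3 := mul_le_mul_of_nonneg_right hb (mul_nonneg (by positivity : (0:ℝ) ≤ (m:ℝ)+1) h2)
    push_cast
    nlinarith [e1, e2, e3, h2, h3, pow_nonneg h0 (m+1), mul_nonneg h2 (pow_nonneg h0 (m+1))]

lemma pow_ub {a b c : ℝ} (h0 : 0 ≤ b) (hba : b ≤ a) (hac : a ≤ c) (n : ℕ) :
    a^(n+1) - b^(n+1) ≤ ((n:ℝ)+1) * c^n * (a-b) := by
  induction n with
  | zero => simp
  | succ m ih =>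
    have ha0 : 0 ≤ a := le_trans h0 hba
    have hc0 : 0 ≤ c := le_trans ha0 hac
    have hbc : b ≤ c := le_trans hba hac
    have h1 : b^(m+1) ≤ c^(m+1) := pow_le_pow_left₀ h0 hbc _
    have h3 : a * (a^(m+1) - b^(m+1)) ≤ c * (((m:ℝ)+1) * c^m * (a-b)) := by
      apply mul_le_mul hac ih (by nlinarith [pow_le_pow_left₀ h0 hba (m+1)]) hc0
    have e0 : c * (((m:ℝ)+1) * c^m * (a-b)) = ((m:ℝ)+1) * c^(m+1) * (a-b) := by ring
    have h3' := h3.trans_eq e0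
    have h4 : a^(m+1+1) - b^(m+1+1) = a * (a^(m+1) - b^(m+1)) + (a-b) * b^(m+1) := by ring
    have h5 : (a-b) * b^(m+1) ≤ (a-b) * c^(m+1) :=
      mul_le_mul_of_nonneg_left h1 (by linarith)
    push_cast
    nlinarith [h3', h4, h5]


section PrimDeriv
variable {E : Type*} [NormedAddCommGroup E] [NormedSpace ℝ E] [CompleteSpace E]

lemma hasDerivAt_primitive_of_leb (f : ℝ → E) (hloc : ∀ a b : ℝ, IntervalIntegrable f volume a b) {x : ℝ}
    (hx : Tendsto (fun r => ⨍ y in Metric.closedBall x r, ‖f y - f x‖) (nhdsWithin 0 (Ioi 0)) (nhds 0)) :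
    HasDerivAt (fun y => ∫ t in (0:ℝ)..y, f t) (f x) x := by
  rw [hasDerivAt_iff_isLittleO, Asymptotics.isLittleO_iff]
  intro c hc
  have h2 : ∀ᶠ r in nhdsWithin (0:ℝ) (Ioi 0),
      (⨍ y in Metric.closedBall x r, ‖f y - f x‖) < c / 2 := by
    exact hx.eventually_lt_const (by positivity)
  rw [Filter.Eventually, mem_nhdsGT_iff_exists_Ioc_subset] at h2
  obtain ⟨r₀, hr₀, hsub⟩ := h2
  have hr₀' : (0:ℝ) < r₀ := hr₀
  filter_upwards [Metric.ball_mem_nhds x hr₀'] with y hy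
  rcases eq_or_ne y x with rfl | hne
  · simp
  set r := |y - x| with hrdef
  have hrpos : 0 < r := abs_pos.2 (sub_ne_zero.2 hne)
  have hrle : r ≤ r₀ := by
    have := (Metric.mem_ball.1 hy)
    rw [Real.dist_eq] at this; exact le_of_lt this
  have havg : (⨍ z in Metric.closedBall x r, ‖f z - f x‖) < c / 2 := hsub ⟨hrpos, hrle⟩
  -- rewrite the difference as an interval integral
  have hFy : (∫ t in (0:ℝ)..y, f t) - (∫ t in (0:ℝ)..x, f t) = ∫ t in x..y, f t := by
    rw [← integral_add_adjacent_intervals (hloc 0 x) (hloc x y)]; abel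
  have hconst : (y - x) • f x = ∫ t in x..y, f x := (intervalIntegral.integral_const (f x)).symm
  have hkey : (∫ t in (0:ℝ)..y, f t) - (∫ t in (0:ℝ)..x, f t) - (y - x) • f x
      = ∫ t in x..y, (f t - f x) := by
    rw [hFy, hconst, ← intervalIntegral.integral_sub (hloc x y) intervalIntegrable_const]
  rw [hkey]
  have hIcb : IntegrableOn (fun z => ‖f z - f x‖) (Metric.closedBall x r) := by
    rw [Real.closedBall_eq_Icc]
    have : IntegrableOn f (Icc (x - r) (x + r)) := by
      rw [integrableOn_Icc_iff_integrableOn_Ioc]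
      exact (hloc (x - r) (x + r)).1.mono_set subset_rfl
    exact ((this.sub (integrableOn_const measure_Icc_lt_top.ne)).norm)
  have hsubset : Set.uIoc x y ⊆ Metric.closedBall x r := by
    intro t ht
    rw [Set.mem_uIoc] at ht
    rw [Metric.mem_closedBall, Real.dist_eq]
    have h3 : y - x ≤ r := le_abs_self _
    have h4 : -r ≤ y - x := neg_abs_le _
    have h5 : 0 ≤ r := hrpos.le
    rcases ht with ⟨h1, h2⟩ | ⟨h1, h2⟩ <;> (rw [abs_le]; constructor <;> linarith)
  calc ‖∫ t in x..y, (f t - f x)‖ ≤ ∫ t in Set.uIoc x y, ‖f t - f x‖ :=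
        intervalIntegral.norm_integral_le_integral_norm_uIoc
    _ ≤ ∫ t in Metric.closedBall x r, ‖f t - f x‖ := by
        apply setIntegral_mono_set hIcb
        · filter_upwards with t using norm_nonneg _
        · exact HasSubset.Subset.eventuallyLE hsubset
    _ = (volume (Metric.closedBall x r)).toReal • ⨍ z in Metric.closedBall x r, ‖f z - f x‖ := by
        rw [← measureReal_def, measure_smul_setAverage _ (by
          rw [Real.volume_closedBall]; exact ENNReal.ofReal_ne_top)]
    _ ≤ (volume (Metric.closedBall x r)).toReal * (c / 2) := by
        rw [smul_eq_mul]
        apply mul_le_mul_of_nonneg_left havg.le ENNReal.toReal_nonneg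
    _ ≤ c * ‖y - x‖ := by
        rw [Real.volume_closedBall, ENNReal.toReal_ofReal (by linarith)]
        rw [Real.norm_eq_abs, ← hrdef]
        nlinarith



end PrimDeriv

lemma key_ineq {g : ℝ → ℝ} (hg0 : ∀ s, 0 ≤ g s)
    (hgi : ∀ a b : ℝ, IntervalIntegrable g volume a b)
    (n : ℕ) {x : ℝ} (hx : 0 ≤ x) :
    ∫ s in (0:ℝ)..x, g s * (∫ t in (0:ℝ)..s, g t)^n
      ≤ (∫ s in (0:ℝ)..x, g s)^(n+1) / ((n:ℝ)+1) := by
  set M : ℝ → ℝ := fun y => ∫ t in (0:ℝ)..y, g t with hM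
  have hMc : Continuous M := intervalIntegral.continuous_primitive hgi 0
  have hMadd : ∀ u v : ℝ, M v - M u = ∫ t in u..v, g t := by
    intro u v
    have := integral_add_adjacent_intervals (hgi 0 u) (hgi u v)
    simp only [hM]; linarith [this]
  have hMmono : Monotone M := by
    intro u v huv
    have h1 : 0 ≤ ∫ t in u..v, g t :=
      intervalIntegral.integral_nonneg huv (fun s _ => hg0 s)
    linarith [hMadd u v]
  have hM0 : M 0 = 0 := integral_same
  have hMnn : ∀ y, 0 ≤ y → 0 ≤ M y := fun y hy => hM0 ▸ hMmono hy
  have hgM : ∀ (k : ℕ) (a b : ℝ), IntervalIntegrable (fun s => g s * M s ^ k) volume a b :=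
    fun k a b => (hgi a b).mul_continuousOn ((hMc.pow k).continuousOn)
  -- case n = 0
  obtain _ | m := n
  · simp
  -- main case
  rw [show ((m+1:ℕ):ℝ) = (m:ℝ)+1 from by push_cast; ring]
  set RHS := M x ^ (m+1+1) / ((m:ℝ)+1+1) with hRHS
  have hcoefnn : (0:ℝ) ≤ ((m:ℝ)+1) * M x ^ m * M x := by
    have := hMnn x hx; positivity
  have main : ∀ ε : ℝ, 0 < ε →
      (∫ s in (0:ℝ)..x, g s * M s ^ (m+1)) ≤ RHS + ((m:ℝ)+1) * M x ^ m * M x * ε := by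
    intro ε hε
    rcases eq_or_lt_of_le hx with hx0 | hxpos
    · rw [← hx0]
      simp only [integral_same, hM0]
      rw [hRHS, ← hx0]
      simp only [hM0]
      rw [zero_pow (by omega)]
      positivity
    -- uniform continuity of M on [0, x]
    have hu : UniformContinuousOn M (Icc 0 x) :=
      (isCompact_Icc).uniformContinuousOn_of_continuous hMc.continuousOn
    rw [Metric.uniformContinuousOn_iff] at hu
    obtain ⟨δ, hδ, hδ'⟩ := hu ε hε
    obtain ⟨N, hN⟩ := exists_nat_gt (x / δ)
    have hNpos : 0 < (N:ℝ) := lt_of_le_of_lt (by positivity) hN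
    have hstep : x / N < δ := by
      rw [div_lt_iff₀ hNpos]
      rw [div_lt_iff₀ hδ] at hN
      linarith [hN]
    set t : ℕ → ℝ := fun k => k * (x / N) with ht
    have ht0 : t 0 = 0 := by simp [ht]
    have htN : t N = x := by
      simp only [ht]; field_simp
    have htmono : ∀ k, t k ≤ t (k+1) := by
      intro k
      have : (0:ℝ) ≤ x / N := by positivity
      simp only [ht]; push_cast; nlinarith
    have htmem : ∀ k, k ≤ N → t k ∈ Icc 0 x := by
      intro k hk
      constructor
      · simp only [ht]; positivity
      · rw [← htN]; simp only [ht]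
        apply mul_le_mul_of_nonneg_right _ (by positivity)
        exact_mod_cast hk
    have htdist : ∀ k, t (k+1) - t k = x / N := by
      intro k; simp only [ht]; push_cast; ring
    have hsum1 : ∑ k ∈ Finset.range N, ∫ s in t k..t (k+1), g s * M s ^ (m+1)
        = ∫ s in (0:ℝ)..x, g s * M s ^ (m+1) := by
      rw [intervalIntegral.sum_integral_adjacent_intervals (fun k _ => hgM (m+1) _ _)]
      rw [ht0, htN]
    have hsum2 : ∑ k ∈ Finset.range N, (M (t (k+1))^(m+1+1)/((m:ℝ)+1+1) - M (t k)^(m+1+1)/((m:ℝ)+1+1)) = RHS := by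
      rw [Finset.sum_range_sub (fun k => M (t k)^(m+1+1)/((m:ℝ)+1+1))]
      rw [ht0, htN, hRHS, hM0]
      rw [zero_pow (by omega)]
      simp
    have hsum3 : ∑ k ∈ Finset.range N, (M (t (k+1)) - M (t k)) = M x := by
      rw [Finset.sum_range_sub (fun k => M (t k)), ht0, htN, hM0, sub_zero]
    -- per-term bound
    have hterm : ∀ k ∈ Finset.range N,
        (∫ s in t k..t (k+1), g s * M s ^ (m+1))
          - (M (t (k+1))^(m+1+1)/((m:ℝ)+1+1) - M (t k)^(m+1+1)/((m:ℝ)+1+1))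
        ≤ ((m:ℝ)+1) * M x ^ m * ε * (M (t (k+1)) - M (t k)) := by
      intro k hk
      rw [Finset.mem_range] at hk
      set b := M (t k) with hb
      set a := M (t (k+1)) with ha
      have hmem1 := htmem k hk.le
      have hmem2 := htmem (k+1) hk
      have h0b : 0 ≤ b := hMnn _ hmem1.1
      have hba : b ≤ a := hMmono (htmono k)
      have hax : a ≤ M x := hMmono hmem2.2
      have hΔε : a - b ≤ ε := by
        have hdistlt : dist (t (k+1)) (t k) < δ := by
          rw [Real.dist_eq, abs_of_nonneg (by linarith [htmono k]), htdist k]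
          exact hstep
        have hd := hδ' (t (k+1)) hmem2 (t k) hmem1 hdistlt
        rw [Real.dist_eq] at hd
        exact le_of_lt (lt_of_le_of_lt (le_abs_self _) hd)
      have hΔ : ∫ s in t k..t (k+1), g s = a - b := (hMadd (t k) (t (k+1))).symm
      -- integral upper bound
      have hIub : (∫ s in t k..t (k+1), g s * M s ^ (m+1)) ≤ a^(m+1) * (a - b) := by
        rw [← hΔ, ← intervalIntegral.integral_const_mul]
        apply intervalIntegral.integral_mono_on (htmono k) (hgM (m+1) _ _)
          ((hgi _ _).const_mul _)
        intro s hs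
        rw [mul_comm (a^(m+1))]
        apply mul_le_mul_of_nonneg_left _ (hg0 s)
        exact pow_le_pow_left₀ (hMnn s (le_trans hmem1.1 hs.1)) (hMmono hs.2) _
      -- telescoping lower bound for the antiderivative term
      have hHlb : b^(m+1) * (a - b) ≤ a^(m+1+1)/((m:ℝ)+1+1) - b^(m+1+1)/((m:ℝ)+1+1) := by
        have := pow_lb h0b hba (m+1)
        rw [div_sub_div_same, le_div_iff₀ (by positivity)]
        push_cast at this ⊢
        nlinarith [this]
      have hpow : a^(m+1) - b^(m+1) ≤ ((m:ℝ)+1) * M x ^ m * ε := by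
        calc a^(m+1) - b^(m+1) ≤ ((m:ℝ)+1) * M x ^ m * (a - b) := pow_ub h0b hba hax m
        _ ≤ ((m:ℝ)+1) * M x ^ m * ε := by
            apply mul_le_mul_of_nonneg_left hΔε
            have := hMnn x hx; positivity
      have hab : 0 ≤ a - b := by linarith
      nlinarith [hIub, hHlb, hpow, mul_le_mul_of_nonneg_right hpow hab]
    -- sum up
    have hsumle := Finset.sum_le_sum hterm
    rw [Finset.sum_sub_distrib, hsum1, hsum2, ← Finset.mul_sum, hsum3] at hsumle
    linarith [hsumle]
  -- conclude
  refine le_of_forall_pos_le_add (fun ε' hε' => ?_)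
  set C := ((m:ℝ)+1) * M x ^ m * M x with hC
  have h1 := main (ε' / (C + 1)) (by positivity)
  have h2 : C * (ε' / (C + 1)) ≤ ε' := by
    rw [mul_div_assoc'] at *
    rw [div_le_iff₀ (by positivity)]
    nlinarith [hε'.le, hcoefnn]
  calc (∫ s in (0:ℝ)..x, g s * M s ^ (m+1)) ≤ RHS + C * (ε' / (C + 1)) := h1
  _ ≤ RHS + ε' := by linarith



abbrev VC := Fin 2 → ℂ

lemma norm_mulVec_le (A : Matrix (Fin 2) (Fin 2) ℂ) (v : VC) {C : ℝ}
    (hC : ∀ i j, ‖A i j‖ ≤ C) : ‖A.mulVec v‖ ≤ 2 * C * ‖v‖ := by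
  have hC0 : 0 ≤ C := le_trans (norm_nonneg _) (hC 0 0)
  rw [pi_norm_le_iff_of_nonneg (by positivity)]
  intro i
  have he : A.mulVec v i = A i 0 * v 0 + A i 1 * v 1 := by
    simp [Matrix.mulVec, dotProduct, Fin.sum_univ_two]
  rw [he]
  calc ‖A i 0 * v 0 + A i 1 * v 1‖ ≤ ‖A i 0 * v 0‖ + ‖A i 1 * v 1‖ := norm_add_le _ _
  _ = ‖A i 0‖ * ‖v 0‖ + ‖A i 1‖ * ‖v 1‖ := by rw [norm_mul, norm_mul]
  _ ≤ C * ‖v‖ + C * ‖v‖ := by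
      gcongr
      · exact hC i 0
      · exact norm_le_pi_norm v 0
      · exact hC i 1
      · exact norm_le_pi_norm v 1
  _ = 2 * C * ‖v‖ := by ring

lemma int_mulVec {F : ℝ → Matrix (Fin 2) (Fin 2) ℂ} {u : ℝ → VC} {m : ℝ → ℝ}
    (hF : ∀ i j, Measurable fun s => F s i j) (hu : Continuous u)
    (hm : ∀ a b : ℝ, IntervalIntegrable m volume a b)
    (hb : ∀ s i j, ‖F s i j‖ ≤ m s) (a b : ℝ) :
    IntervalIntegrable (fun s => (F s).mulVec (u s)) volume a b := by
  have hm0 : ∀ s, 0 ≤ m s := fun s => le_trans (norm_nonneg _) (hb s 0 0)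
  rw [intervalIntegrable_iff]
  obtain ⟨C, hC⟩ := (isCompact_uIcc (a := a) (b := b)).exists_bound_of_continuousOn hu.continuousOn
  have hC0 : 0 ≤ C := le_trans (norm_nonneg _) (hC a left_mem_uIcc)
  have hmeas : AEStronglyMeasurable (fun s => (F s).mulVec (u s)) (volume.restrict (Set.uIoc a b)) := by
    have hum : ∀ j, Measurable fun s => u s j := fun j => ((continuous_apply j).comp hu).measurable
    have : Measurable fun s => (F s).mulVec (u s) := by
      rw [measurable_pi_iff]
      intro i
      have he : (fun s => (F s).mulVec (u s) i)
          = fun s => F s i 0 * u s 0 + F s i 1 * u s 1 := by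
        funext s; simp [Matrix.mulVec, dotProduct, Fin.sum_univ_two]
      rw [he]
      exact ((hF i 0).mul (hum 0)).add ((hF i 1).mul (hum 1))
    exact this.aestronglyMeasurable
  refine Integrable.mono' (g := fun s => 2 * m s * C) ?_ hmeas ?_
  · exact (((intervalIntegrable_iff.1 (hm a b)).const_mul 2).mul_const C)
  · filter_upwards [ae_restrict_mem measurableSet_uIoc] with s hs
    calc ‖(F s).mulVec (u s)‖ ≤ 2 * m s * ‖u s‖ := norm_mulVec_le _ _ (hb s)
    _ ≤ 2 * m s * C := by
        apply mul_le_mul_of_nonneg_left (hC s (uIoc_subset_uIcc hs)) (by nlinarith [hm0 s])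

def Amod (p q : ℝ → ℂ) (lam : ℂ) : ℝ → Matrix (Fin 2) (Fin 2) ℂ :=
  Set.indicator (Ici 0) (fun s => AmatC p q lam s)

def A0m (p q : ℝ → ℂ) : ℝ → Matrix (Fin 2) (Fin 2) ℂ :=
  Set.indicator (Ici 0) (fun s => !![q s, -p s; -p s, -q s])

def J1m : ℝ → Matrix (Fin 2) (Fin 2) ℂ :=
  Set.indicator (Ici 0) (fun _ => !![0, -1; 1, 0])

def mRf (p q : ℝ → ℂ) (R : ℝ) : ℝ → ℝ :=
  Set.indicator (Ici 0) (fun s => ‖p s‖ + ‖q s‖ + R)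

lemma indicator_apply2 {α : Type*} (S : Set α) (F : α → Matrix (Fin 2) (Fin 2) ℂ) (s : α) (i j : Fin 2) :
    (Set.indicator S F s) i j = Set.indicator S (fun s => F s i j) s := by
  by_cases hs : s ∈ S <;> simp [hs]

lemma Amod_split (p q : ℝ → ℂ) (lam : ℂ) (s : ℝ) :
    Amod p q lam s = A0m p q s + lam • J1m s := by
  by_cases hs : s ∈ Ici (0:ℝ)
  · simp only [Amod, A0m, J1m, Set.indicator_of_mem hs]
    ext i j
    fin_cases i <;> fin_cases j <;>
      simp [AmatC, Matrix.add_apply, Matrix.smul_apply] <;> ring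
  · simp [Amod, A0m, J1m, Set.indicator_of_notMem hs]

section withPQ

variable {p q : ℝ → ℂ} (hpm : Measurable p) (hqm : Measurable q)
    (hp : ∀ a : ℝ, 0 ≤ a → IntegrableOn p (Icc 0 a))
    (hq : ∀ a : ℝ, 0 ≤ a → IntegrableOn q (Icc 0 a))

include hpm hqm in
lemma Amod_meas (lam : ℂ) (i j : Fin 2) : Measurable fun s => Amod p q lam s i j := by
  simp only [Amod, indicator_apply2]
  apply Measurable.indicator _ measurableSet_Ici
  fin_cases i <;> fin_cases j <;> simp [AmatC] <;> fun_prop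

include hpm hqm in
lemma A0m_meas (i j : Fin 2) : Measurable fun s => A0m p q s i j := by
  simp only [A0m, indicator_apply2]
  apply Measurable.indicator _ measurableSet_Ici
  fin_cases i <;> fin_cases j <;> simp <;> fun_prop

lemma J1m_meas (i j : Fin 2) : Measurable fun s => J1m s i j := by
  simp only [J1m, indicator_apply2]
  exact Measurable.indicator measurable_const measurableSet_Ici

include hp hq in
lemma mRf_int {R : ℝ} (hR : 0 ≤ R) (a b : ℝ) : IntervalIntegrable (mRf p q R) volume a b := by
  rw [intervalIntegrable_iff, mRf, IntegrableOn, integrable_indicator_iff measurableSet_Ici]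
  have hsub : Ici (0:ℝ) ∩ Set.uIoc a b ⊆ Icc 0 (|a| + |b|) := by
    rintro s ⟨hs0, hs⟩
    refine ⟨hs0, ?_⟩
    rw [Set.mem_uIoc] at hs
    have h1 : a ≤ |a| + |b| := by nlinarith [le_abs_self a, abs_nonneg b]
    have h2 : b ≤ |a| + |b| := by nlinarith [le_abs_self b, abs_nonneg a]
    rcases hs with ⟨_, h⟩ | ⟨_, h⟩ <;> linarith
  have hInt : IntegrableOn (fun s => ‖p s‖ + ‖q s‖ + R) (Icc 0 (|a| + |b|)) := by
    apply Integrable.add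
    · exact ((hp _ (by positivity)).norm.add ((hq _ (by positivity)).norm))
    · exact integrableOn_const measure_Icc_lt_top.ne
  have hfin := hInt.mono_set hsub
  rwa [IntegrableOn, Measure.restrict_restrict measurableSet_Ici]
end withPQ

section withPQ2

variable {p q : ℝ → ℂ} (hpm : Measurable p) (hqm : Measurable q)
    (hp : ∀ a : ℝ, 0 ≤ a → IntegrableOn p (Icc 0 a))
    (hq : ∀ a : ℝ, 0 ≤ a → IntegrableOn q (Icc 0 a))

lemma Amod_bound {lam : ℂ} {R : ℝ} (hR : ‖lam‖ ≤ R) (s : ℝ) (i j : Fin 2) :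
    ‖Amod p q lam s i j‖ ≤ mRf p q R s := by
  by_cases hs : s ∈ Ici (0:ℝ)
  · simp only [Amod, mRf, Set.indicator_of_mem hs]
    have h0R : 0 ≤ R := le_trans (norm_nonneg lam) hR
    have hps : (0:ℝ) ≤ ‖p s‖ := norm_nonneg _
    have hqs : (0:ℝ) ≤ ‖q s‖ := norm_nonneg _
    fin_cases i <;> fin_cases j <;> simp [AmatC]
    · linarith
    · calc ‖-p s - lam‖ = ‖-(p s + lam)‖ := by ring_nf
      _ ≤ ‖p s‖ + ‖lam‖ := by rw [norm_neg]; exact norm_add_le _ _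
      _ ≤ ‖p s‖ + ‖q s‖ + R := by
          have := norm_nonneg (q s); linarith
    · calc ‖lam - p s‖ ≤ ‖lam‖ + ‖p s‖ := norm_sub_le _ _
      _ ≤ ‖p s‖ + ‖q s‖ + R := by
          have := norm_nonneg (q s); linarith
    · linarith
  · simp [Amod, mRf, Set.indicator_of_notMem hs]

lemma mRf_nonneg {R : ℝ} (hR : 0 ≤ R) (s : ℝ) : 0 ≤ mRf p q R s := by
  apply Set.indicator_nonneg
  intro y _
  have := norm_nonneg (p y); have := norm_nonneg (q y); linarith

def ggf (p q : ℝ → ℂ) (R : ℝ) : ℝ → ℝ := fun s => 2 * mRf p q R s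

def GGf (p q : ℝ → ℂ) (R : ℝ) : ℝ → ℝ := fun x => ∫ s in (0:ℝ)..x, ggf p q R s

lemma ggf_nonneg {R : ℝ} (hR : 0 ≤ R) (s : ℝ) : 0 ≤ ggf p q R s := by
  have := mRf_nonneg (p := p) (q := q) hR s; simp only [ggf]; linarith

include hp hq in
lemma ggf_int {R : ℝ} (hR : 0 ≤ R) (a b : ℝ) : IntervalIntegrable (ggf p q R) volume a b :=
  (mRf_int hp hq hR a b).const_mul 2

include hp hq in
lemma GGf_cont {R : ℝ} (hR : 0 ≤ R) : Continuous (GGf p q R) :=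
  intervalIntegral.continuous_primitive (ggf_int hp hq hR) 0

include hp hq in
lemma GGf_mono {R : ℝ} (hR : 0 ≤ R) : Monotone (GGf p q R) := by
  intro u v huv
  have h1 : 0 ≤ ∫ t in u..v, ggf p q R t :=
    intervalIntegral.integral_nonneg huv (fun s _ => ggf_nonneg hR s)
  have h2 := integral_add_adjacent_intervals (ggf_int hp hq hR 0 u) (ggf_int hp hq hR u v)
  simp only [GGf]; linarith

include hp hq in
lemma GGf_nonneg {R : ℝ} (hR : 0 ≤ R) {x : ℝ} (hx : 0 ≤ x) : 0 ≤ GGf p q R x := by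
  have := GGf_mono hp hq hR hx
  simpa [GGf] using this

include hpm hqm hp hq in
lemma step_bound {lam : ℂ} {R : ℝ} (hR : ‖lam‖ ≤ R) {u : ℝ → VC} (hu : Continuous u)
    {K : ℝ} (hK : 0 ≤ K) (n : ℕ) {x : ℝ} (hx : 0 ≤ x)
    (hub : ∀ s ∈ Icc 0 x, ‖u s‖ ≤ K * GGf p q R s ^ n / n.factorial) :
    ‖∫ s in (0:ℝ)..x, (Amod p q lam s).mulVec (u s)‖
      ≤ K * GGf p q R x ^ (n+1) / (n+1).factorial := by
  have hR0 : 0 ≤ R := le_trans (norm_nonneg lam) hR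
  have hInt := int_mulVec (Amod_meas hpm hqm lam) hu (mRf_int hp hq hR0)
    (Amod_bound hR) 0 x
  have hggi := ggf_int hp hq hR0
  have hGGc := GGf_cont hp hq hR0
  calc ‖∫ s in (0:ℝ)..x, (Amod p q lam s).mulVec (u s)‖
      ≤ ∫ s in (0:ℝ)..x, ‖(Amod p q lam s).mulVec (u s)‖ :=
        intervalIntegral.norm_integral_le_integral_norm hx
  _ ≤ ∫ s in (0:ℝ)..x, ggf p q R s * (K * GGf p q R s ^ n / n.factorial) := by
      apply intervalIntegral.integral_mono_on hx hInt.norm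
        ((hggi 0 x).mul_continuousOn (by fun_prop))
      intro s hs
      calc ‖(Amod p q lam s).mulVec (u s)‖ ≤ 2 * mRf p q R s * ‖u s‖ :=
            norm_mulVec_le _ _ (Amod_bound hR s)
      _ ≤ 2 * mRf p q R s * (K * GGf p q R s ^ n / n.factorial) := by
          apply mul_le_mul_of_nonneg_left (hub s hs)
          have := mRf_nonneg (p := p) (q := q) hR0 s; linarith
      _ = ggf p q R s * (K * GGf p q R s ^ n / n.factorial) := rfl
  _ = (K / n.factorial) * ∫ s in (0:ℝ)..x, ggf p q R s * GGf p q R s ^ n := by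
      rw [← intervalIntegral.integral_const_mul]
      apply intervalIntegral.integral_congr
      intro s _; ring
  _ ≤ (K / n.factorial) * (GGf p q R x ^ (n+1) / ((n:ℝ)+1)) := by
      apply mul_le_mul_of_nonneg_left
        (key_ineq (ggf_nonneg hR0) hggi n hx) (by positivity)
  _ = K * GGf p q R x ^ (n+1) / (n+1).factorial := by
      have hf : ((n.factorial:ℝ)) ≠ 0 := Nat.cast_ne_zero.2 n.factorial_ne_zero
      have hn : ((n:ℝ)+1) ≠ 0 := by positivity
      rw [Nat.factorial_succ]
      push_cast
      field_simp

end withPQ2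
section withPQ3

variable (p q : ℝ → ℂ)

def wcoef (c : VC) : ℕ → ℕ → ℝ → VC
  | 0, 0 => fun _ => c
  | 0, _+1 => fun _ => 0
  | n+1, 0 => fun x => ∫ s in (0:ℝ)..x, (A0m p q s).mulVec (wcoef c n 0 s)
  | n+1, k+1 => fun x => ∫ s in (0:ℝ)..x,
      ((A0m p q s).mulVec (wcoef c n (k+1) s) + (J1m s).mulVec (wcoef c n k s))

def polyc (c : VC) (lam : ℂ) (n : ℕ) (x : ℝ) : VC :=
  ∑ k ∈ Finset.range (n+1), lam ^ k • wcoef p q c n k x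

def oneI : ℝ → ℝ := mRf (fun _ => (0:ℂ)) (fun _ => (0:ℂ)) 1

lemma oneI_int (a b : ℝ) : IntervalIntegrable oneI volume a b := by
  apply mRf_int (p := fun _ => (0:ℂ)) (q := fun _ => (0:ℂ)) _ _ zero_le_one
  · intro a' _; exact (integrable_zero _ _ _).integrableOn
  · intro a' _; exact (integrable_zero _ _ _).integrableOn

lemma A0m_bound (s : ℝ) (i j : Fin 2) : ‖A0m p q s i j‖ ≤ mRf p q 0 s := by
  by_cases hs : s ∈ Ici (0:ℝ)
  · simp only [A0m, mRf, Set.indicator_of_mem hs]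
    have h1 : (0:ℝ) ≤ ‖p s‖ := norm_nonneg _
    have h2 : (0:ℝ) ≤ ‖q s‖ := norm_nonneg _
    fin_cases i <;> fin_cases j <;> simp <;> linarith
  · simp [A0m, mRf, Set.indicator_of_notMem hs]

lemma J1m_bound (s : ℝ) (i j : Fin 2) : ‖J1m s i j‖ ≤ oneI s := by
  by_cases hs : s ∈ Ici (0:ℝ)
  · simp only [J1m, oneI, mRf, Set.indicator_of_mem hs]
    fin_cases i <;> fin_cases j <;> simp
  · simp [J1m, oneI, mRf, Set.indicator_of_notMem hs]

variable {p q} (hpm : Measurable p) (hqm : Measurable q)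
    (hp : ∀ a : ℝ, 0 ≤ a → IntegrableOn p (Icc 0 a))
    (hq : ∀ a : ℝ, 0 ≤ a → IntegrableOn q (Icc 0 a))

include hpm hqm hp hq in
lemma wcoef_cont (c : VC) : ∀ n k, Continuous (wcoef p q c n k) := by
  intro n
  induction n with
  | zero =>
    intro k
    match k with
    | 0 => exact continuous_const
    | k+1 => exact continuous_const
  | succ n ih =>
    intro k
    match k with
    | 0 =>
      exact intervalIntegral.continuous_primitive
        (int_mulVec (A0m_meas hpm hqm) (ih 0) (mRf_int hp hq le_rfl) (A0m_bound p q)) 0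
    | k+1 =>
      apply intervalIntegral.continuous_primitive
        (fun a b => IntervalIntegrable.add
          (int_mulVec (A0m_meas hpm hqm) (ih (k+1)) (mRf_int hp hq le_rfl) (A0m_bound p q) a b)
          (int_mulVec J1m_meas (ih k) oneI_int J1m_bound a b)) 0

lemma wcoef_eq_zero (c : VC) : ∀ n k, n < k → wcoef p q c n k = fun _ => (0:VC) := by
  intro n
  induction n with
  | zero =>
    intro k hk
    match k, hk with
    | k+1, _ => rfl
  | succ n ih =>
    intro k hk
    match k, hk with
    | k+1, hk =>
      funext x
      show (∫ s in (0:ℝ)..x,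
        ((A0m p q s).mulVec (wcoef p q c n (k+1) s) + (J1m s).mulVec (wcoef p q c n k s))) = 0
      have h1 : wcoef p q c n (k+1) = fun _ => (0:VC) := ih (k+1) (by omega)
      have h2 : wcoef p q c n k = fun _ => (0:VC) := ih k (by omega)
      rw [h1, h2]
      simp [Matrix.mulVec_zero]

lemma wcoef_nonpos (c : VC) (n k : ℕ) {x : ℝ} (hx : x ≤ 0) :
    wcoef p q c (n+1) k x = 0 := by
  have hae : ∀ᵐ s ∂(volume : Measure ℝ), s ≠ 0 :=
    compl_mem_ae_iff.2 Real.volume_singleton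
  have hzero : ∀ (u v : ℝ → VC), (∫ s in (0:ℝ)..x,
      ((A0m p q s).mulVec (u s) + (J1m s).mulVec (v s))) = 0 := by
    intro u v
    have : ∀ᵐ s ∂(volume : Measure ℝ), s ∈ Set.uIoc (0:ℝ) x →
        ((A0m p q s).mulVec (u s) + (J1m s).mulVec (v s)) = 0 := by
      filter_upwards [hae] with s hs hmem
      have hsle : s ≤ 0 := by
        rw [Set.uIoc_of_ge hx, Set.mem_Ioc] at hmem
        exact hmem.2
      have hnot : s ∉ Ici (0:ℝ) := by
        simp only [mem_Ici, not_le]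
        exact lt_of_le_of_ne hsle hs
      simp [A0m, J1m, Set.indicator_of_notMem hnot, Matrix.zero_mulVec]
    calc (∫ s in (0:ℝ)..x, ((A0m p q s).mulVec (u s) + (J1m s).mulVec (v s)))
        = ∫ s in (0:ℝ)..x, (0:VC) := intervalIntegral.integral_congr_ae this
    _ = 0 := intervalIntegral.integral_zero
  match k with
  | 0 =>
    show (∫ s in (0:ℝ)..x, (A0m p q s).mulVec (wcoef p q c n 0 s)) = 0
    have := hzero (wcoef p q c n 0) (fun _ => 0)
    simpa [Matrix.mulVec_zero] using this
  | k+1 => exact hzero _ _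

include hpm hqm hp hq in
lemma polyc_cont (c : VC) (lam : ℂ) (n : ℕ) : Continuous (polyc p q c lam n) := by
  apply continuous_finset_sum
  intro k _
  exact (wcoef_cont hpm hqm hp hq c n k).const_smul (lam ^ k)

lemma polyc_zero (c : VC) (lam : ℂ) (x : ℝ) : polyc p q c lam 0 x = c := by
  simp [polyc, wcoef]

lemma polyc_nonpos (c : VC) (lam : ℂ) (n : ℕ) {x : ℝ} (hx : x ≤ 0) :
    polyc p q c lam (n+1) x = 0 := by
  simp only [polyc]
  apply Finset.sum_eq_zero
  intro k _
  rw [wcoef_nonpos c n k hx, smul_zero]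

lemma mulVec_sum_smul (M : Matrix (Fin 2) (Fin 2) ℂ) (f : ℕ → VC) (coeff : ℕ → ℂ)
    (s : Finset ℕ) :
    M.mulVec (∑ k ∈ s, coeff k • f k) = ∑ k ∈ s, coeff k • M.mulVec (f k) := by
  calc M.mulVec (∑ k ∈ s, coeff k • f k) = M.mulVecLin (∑ k ∈ s, coeff k • f k) := by
        rw [Matrix.mulVecLin_apply]
  _ = ∑ k ∈ s, M.mulVecLin (coeff k • f k) := map_sum _ _ _
  _ = ∑ k ∈ s, coeff k • M.mulVec (f k) := by
      apply Finset.sum_congr rfl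
      intro k _
      rw [LinearMap.map_smul, Matrix.mulVecLin_apply]

set_option maxHeartbeats 1000000 in
include hpm hqm hp hq in
lemma polyc_succ (c : VC) (lam : ℂ) (n : ℕ) (x : ℝ) :
    polyc p q c lam (n+1) x
      = ∫ s in (0:ℝ)..x, (Amod p q lam s).mulVec (polyc p q c lam n s) := by
  have hA0i : ∀ k a b, IntervalIntegrable
      (fun s => (A0m p q s).mulVec (wcoef p q c n k s)) volume a b :=
    fun k a b => int_mulVec (A0m_meas hpm hqm) (wcoef_cont hpm hqm hp hq c n k)
      (mRf_int hp hq le_rfl) (A0m_bound p q) a b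
  have hJ1i : ∀ k a b, IntervalIntegrable
      (fun s => (J1m s).mulVec (wcoef p q c n k s)) volume a b :=
    fun k a b => int_mulVec J1m_meas (wcoef_cont hpm hqm hp hq c n k) oneI_int J1m_bound a b
  set I : ℕ → VC := fun k => ∫ s in (0:ℝ)..x, (A0m p q s).mulVec (wcoef p q c n k s) with hI
  set J : ℕ → VC := fun k => ∫ s in (0:ℝ)..x, (J1m s).mulVec (wcoef p q c n k s) with hJ
  -- right-hand side computation
  have hrhs : (∫ s in (0:ℝ)..x, (Amod p q lam s).mulVec (polyc p q c lam n s))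
      = ∑ k ∈ Finset.range (n+1), (lam ^ k • I k + lam ^ (k+1) • J k) := by
    have hptwise : ∀ s, (Amod p q lam s).mulVec (polyc p q c lam n s)
        = ∑ k ∈ Finset.range (n+1),
            (lam ^ k • (A0m p q s).mulVec (wcoef p q c n k s)
              + lam ^ (k+1) • (J1m s).mulVec (wcoef p q c n k s)) := by
      intro s
      rw [Amod_split, Matrix.add_mulVec, Matrix.smul_mulVec]
      simp only [polyc]
      rw [mulVec_sum_smul, mulVec_sum_smul, Finset.smul_sum]
      rw [← Finset.sum_add_distrib]
      apply Finset.sum_congr rfl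
      intro k _
      rw [smul_smul, ← pow_succ']
    have hsa : ∀ k, IntervalIntegrable
        (fun s => lam ^ k • (A0m p q s).mulVec (wcoef p q c n k s)) volume 0 x :=
      fun k => (hA0i k 0 x).smul (lam ^ k)
    have hsb : ∀ k, IntervalIntegrable
        (fun s => lam ^ (k+1) • (J1m s).mulVec (wcoef p q c n k s)) volume 0 x :=
      fun k => (hJ1i k 0 x).smul (lam ^ (k+1))
    rw [intervalIntegral.integral_congr (fun s _ => hptwise s)]
    rw [intervalIntegral.integral_finset_sum (fun k _ => (hsa k).add (hsb k))]
    apply Finset.sum_congr rfl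
    intro k _
    rw [intervalIntegral.integral_add (hsa k) (hsb k),
      intervalIntegral.integral_smul, intervalIntegral.integral_smul]
  rw [hrhs, Finset.sum_add_distrib]
  -- left-hand side computation
  have hw0 : wcoef p q c (n+1) 0 x = I 0 := rfl
  have hwk : ∀ k, wcoef p q c (n+1) (k+1) x = I (k+1) + J k := by
    intro k
    show (∫ s in (0:ℝ)..x,
        ((A0m p q s).mulVec (wcoef p q c n (k+1) s) + (J1m s).mulVec (wcoef p q c n k s)))
      = I (k+1) + J k
    rw [intervalIntegral.integral_add (hA0i (k+1) 0 x) (hJ1i k 0 x)]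
  have hInplus : I (n+1) = 0 := by
    rw [hI]
    simp only [wcoef_eq_zero c n (n+1) (by omega), Matrix.mulVec_zero]
    exact intervalIntegral.integral_zero
  calc polyc p q c lam (n+1) x
      = ∑ k ∈ Finset.range (n+2), lam ^ k • wcoef p q c (n+1) k x := rfl
  _ = (∑ k ∈ Finset.range (n+1), lam ^ (k+1) • wcoef p q c (n+1) (k+1) x)
        + lam ^ 0 • wcoef p q c (n+1) 0 x := Finset.sum_range_succ' _ (n+1)
  _ = (∑ k ∈ Finset.range (n+1), (lam ^ (k+1) • I (k+1) + lam ^ (k+1) • J k)) + I 0 := by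
      rw [hw0, pow_zero, one_smul]
      congr 1
      apply Finset.sum_congr rfl
      intro k _
      rw [hwk k, smul_add]
  _ = ((∑ k ∈ Finset.range (n+1), lam ^ (k+1) • I (k+1)) + I 0)
        + ∑ k ∈ Finset.range (n+1), lam ^ (k+1) • J k := by
      rw [Finset.sum_add_distrib]; abel
  _ = (∑ k ∈ Finset.range (n+1), lam ^ k • I k)
        + ∑ k ∈ Finset.range (n+1), lam ^ (k+1) • J k := by
      congr 1
      have h1 : (∑ k ∈ Finset.range (n+1), lam ^ (k+1) • I (k+1))
          = ∑ k ∈ Finset.range n, lam ^ (k+1) • I (k+1) := by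
        rw [Finset.sum_range_succ, hInplus, smul_zero, add_zero]
      rw [h1]
      rw [Finset.sum_range_succ' (fun k => lam ^ k • I k) n]
      rw [pow_zero, one_smul]

end withPQ3
section withPQ4

variable {p q : ℝ → ℂ} (hpm : Measurable p) (hqm : Measurable q)
    (hp : ∀ a : ℝ, 0 ≤ a → IntegrableOn p (Icc 0 a))
    (hq : ∀ a : ℝ, 0 ≤ a → IntegrableOn q (Icc 0 a))

include hpm hqm hp hq in
lemma polyc_bound (c : VC) {lam : ℂ} {R : ℝ} (hR : ‖lam‖ ≤ R) :
    ∀ n : ℕ, ∀ x : ℝ, 0 ≤ x →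
      ‖polyc p q c lam n x‖ ≤ ‖c‖ * GGf p q R x ^ n / n.factorial := by
  intro n
  induction n with
  | zero => intro x hx; simp [polyc_zero]
  | succ n ih =>
    intro x hx
    rw [polyc_succ hpm hqm hp hq]
    exact step_bound hpm hqm hp hq hR (polyc_cont hpm hqm hp hq c lam n) (norm_nonneg c) n hx
      (fun s hs => ih s hs.1)

include hpm hqm hp hq in
lemma solf_summable (c : VC) (lam : ℂ) (x : ℝ) :
    Summable (fun n => polyc p q c lam n x) := by
  rcases le_or_gt 0 x with hx | hx
  · apply Summable.of_norm_bounded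
      ((Real.summable_pow_div_factorial (GGf p q ‖lam‖ x)).mul_left ‖c‖)
    intro n
    have h1 := polyc_bound hpm hqm hp hq c (le_refl ‖lam‖) n x hx
    rw [mul_div_assoc] at h1
    exact h1
  · apply summable_of_ne_finset_zero (s := {0})
    intro n hn
    match n, hn with
    | n+1, _ => exact polyc_nonpos c lam n hx.le

def solf (p q : ℝ → ℂ) (c : VC) (lam : ℂ) (x : ℝ) : VC := ∑' n, polyc p q c lam n x

lemma solf_nonpos (c : VC) (lam : ℂ) {x : ℝ} (hx : x ≤ 0) : solf p q c lam x = c := by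
  rw [solf, tsum_eq_single 0 (fun n hn => ?_), polyc_zero]
  match n, hn with
  | n+1, _ => exact polyc_nonpos c lam n hx

include hpm hqm hp hq in
lemma solf_unif (c : VC) {lam : ℂ} {R a : ℝ} (hR : ‖lam‖ ≤ R) (ha : 0 ≤ a) :
    TendstoUniformlyOn (fun N x => ∑ n ∈ Finset.range N, polyc p q c lam n x)
      (solf p q c lam) atTop (Icc (-a) a) := by
  have hR0 : (0:ℝ) ≤ R := le_trans (norm_nonneg _) hR
  have hGa : 0 ≤ GGf p q R a := GGf_nonneg hp hq hR0 ha
  apply tendstoUniformlyOn_tsum_nat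
    ((Real.summable_pow_div_factorial (GGf p q R a)).mul_left ‖c‖)
  intro n x hx
  rcases le_or_gt 0 x with h0 | h0
  · have h1 := polyc_bound hpm hqm hp hq c hR n x h0
    have h2 : GGf p q R x ≤ GGf p q R a := GGf_mono hp hq hR0 hx.2
    have h3 : 0 ≤ GGf p q R x := GGf_nonneg hp hq hR0 h0
    rw [mul_div_assoc] at h1
    refine le_trans h1 ?_
    gcongr
  · match n with
    | 0 =>
      rw [polyc_zero]
      simp
    | n+1 =>
      rw [polyc_nonpos c lam n h0.le, norm_zero]
      positivity

include hpm hqm hp hq in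
lemma solf_cont (c : VC) (lam : ℂ) : Continuous (solf p q c lam) := by
  rw [continuous_iff_continuousAt]
  intro x0
  have ha : (0:ℝ) ≤ |x0| + 1 := by positivity
  have hunif := solf_unif hpm hqm hp hq c (le_refl ‖lam‖) ha
  have hco := hunif.continuousOn (Frequently.of_forall (fun N =>
    (continuous_finset_sum _ (fun n _ => polyc_cont hpm hqm hp hq c lam n)).continuousOn))
  exact hco.continuousAt (Icc_mem_nhds
    (by nlinarith [neg_abs_le x0, abs_nonneg x0]) (by nlinarith [le_abs_self x0]))

lemma mulVec_sum (M : Matrix (Fin 2) (Fin 2) ℂ) (f : ℕ → VC) (s : Finset ℕ) :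
    M.mulVec (∑ k ∈ s, f k) = ∑ k ∈ s, M.mulVec (f k) := by
  calc M.mulVec (∑ k ∈ s, f k) = M.mulVecLin (∑ k ∈ s, f k) := by rw [Matrix.mulVecLin_apply]
  _ = ∑ k ∈ s, M.mulVecLin (f k) := map_sum _ _ _
  _ = ∑ k ∈ s, M.mulVec (f k) := by
      apply Finset.sum_congr rfl
      intro k _; rw [Matrix.mulVecLin_apply]

include hpm hqm hp hq in
lemma solf_eq (c : VC) (lam : ℂ) {x : ℝ} (hx : 0 ≤ x) :
    solf p q c lam x = c + ∫ s in (0:ℝ)..x, (Amod p q lam s).mulVec (solf p q c lam s) := by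
  have hR0 : (0:ℝ) ≤ ‖lam‖ := norm_nonneg _
  have hsolc : Continuous (solf p q c lam) := solf_cont hpm hqm hp hq c lam
  have hSN : ∀ N : ℕ, Continuous (fun y => ∑ n ∈ Finset.range N, polyc p q c lam n y) :=
    fun N => continuous_finset_sum _ (fun n _ => polyc_cont hpm hqm hp hq c lam n)
  have hIsol : IntervalIntegrable
      (fun s => (Amod p q lam s).mulVec (solf p q c lam s)) volume 0 x :=
    int_mulVec (Amod_meas hpm hqm lam) hsolc (mRf_int hp hq hR0) (Amod_bound le_rfl) 0 x
  have hISN : ∀ N : ℕ, IntervalIntegrable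
      (fun s => (Amod p q lam s).mulVec (∑ n ∈ Finset.range N, polyc p q c lam n s)) volume 0 x :=
    fun N => int_mulVec (Amod_meas hpm hqm lam) (hSN N) (mRf_int hp hq hR0) (Amod_bound le_rfl) 0 x
  have h1 : Tendsto (fun N => ∑ n ∈ Finset.range (N+1), polyc p q c lam n x) atTop
      (nhds (solf p q c lam x)) :=
    ((solf_summable hpm hqm hp hq c lam x).hasSum.tendsto_sum_nat).comp (tendsto_add_atTop_nat 1)
  have h2 : ∀ N : ℕ, ∑ n ∈ Finset.range (N+1), polyc p q c lam n x
      = c + ∫ s in (0:ℝ)..x,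
          (Amod p q lam s).mulVec (∑ n ∈ Finset.range N, polyc p q c lam n s) := by
    intro N
    rw [Finset.sum_range_succ' (fun n => polyc p q c lam n x) N, polyc_zero]
    have hst : ∀ n, polyc p q c lam (n+1) x
        = ∫ s in (0:ℝ)..x, (Amod p q lam s).mulVec (polyc p q c lam n s) :=
      fun n => polyc_succ hpm hqm hp hq c lam n x
    rw [Finset.sum_congr rfl (fun n _ => hst n)]
    rw [← intervalIntegral.integral_finset_sum (fun n _ =>
      int_mulVec (Amod_meas hpm hqm lam) (polyc_cont hpm hqm hp hq c lam n)
        (mRf_int hp hq hR0) (Amod_bound le_rfl) 0 x)]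
    rw [add_comm]
    congr 1
    apply intervalIntegral.integral_congr
    intro s _
    exact (mulVec_sum (Amod p q lam s) (fun n => polyc p q c lam n s) (Finset.range N)).symm
  have h4 : Tendsto (fun N => c + ∫ s in (0:ℝ)..x,
        (Amod p q lam s).mulVec (∑ n ∈ Finset.range N, polyc p q c lam n s)) atTop
      (nhds (c + ∫ s in (0:ℝ)..x, (Amod p q lam s).mulVec (solf p q c lam s))) := by
    apply tendsto_const_nhds.add
    rw [Metric.tendsto_atTop]
    intro ε hε
    have hGx : 0 ≤ GGf p q ‖lam‖ x := GGf_nonneg hp hq hR0 hx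
    set ε' := ε / (GGf p q ‖lam‖ x + 1) with hε'def
    have hε' : 0 < ε' := by positivity
    have hunif := (solf_unif hpm hqm hp hq c (le_refl ‖lam‖) hx).mono
      (Icc_subset_Icc (show -x ≤ (0:ℝ) by linarith) (le_refl x))
    rw [Metric.tendstoUniformlyOn_iff] at hunif
    have hev := hunif ε' hε'
    rw [eventually_atTop] at hev
    obtain ⟨N₀, hN₀⟩ := hev
    refine ⟨N₀, fun N hN => ?_⟩
    have hsmall : ∀ s ∈ Icc 0 x,
        ‖(∑ n ∈ Finset.range N, polyc p q c lam n s) - solf p q c lam s‖ ≤ ε' := by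
      intro s hs
      have := hN₀ N hN s hs
      rw [dist_eq_norm] at this
      rw [norm_sub_rev]
      exact this.le
    rw [dist_eq_norm, ← intervalIntegral.integral_sub (hISN N) hIsol]
    have hptw : ∀ s, (Amod p q lam s).mulVec (∑ n ∈ Finset.range N, polyc p q c lam n s)
        - (Amod p q lam s).mulVec (solf p q c lam s)
        = (Amod p q lam s).mulVec
            ((∑ n ∈ Finset.range N, polyc p q c lam n s) - solf p q c lam s) := by
      intro s
      rw [Matrix.mulVec_sub]
    calc ‖∫ s in (0:ℝ)..x, ((Amod p q lam s).mulVec (∑ n ∈ Finset.range N, polyc p q c lam n s)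
        - (Amod p q lam s).mulVec (solf p q c lam s))‖
        ≤ ∫ s in (0:ℝ)..x, ‖(Amod p q lam s).mulVec (∑ n ∈ Finset.range N, polyc p q c lam n s)
            - (Amod p q lam s).mulVec (solf p q c lam s)‖ :=
          intervalIntegral.norm_integral_le_integral_norm hx
    _ ≤ ∫ s in (0:ℝ)..x, ggf p q ‖lam‖ s * ε' := by
        apply intervalIntegral.integral_mono_on hx ((hISN N).sub hIsol).norm
          ((ggf_int hp hq hR0 0 x).mul_const ε')
        intro s hs
        rw [hptw s]
        calc ‖(Amod p q lam s).mulVec ((∑ n ∈ Finset.range N, polyc p q c lam n s) - solf p q c lam s)‖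
            ≤ 2 * mRf p q ‖lam‖ s * ‖(∑ n ∈ Finset.range N, polyc p q c lam n s) - solf p q c lam s‖ :=
              norm_mulVec_le _ _ (Amod_bound le_rfl s)
        _ ≤ 2 * mRf p q ‖lam‖ s * ε' := by
            apply mul_le_mul_of_nonneg_left (hsmall s hs)
            have := mRf_nonneg (p := p) (q := q) hR0 s; linarith
        _ = ggf p q ‖lam‖ s * ε' := rfl
    _ = GGf p q ‖lam‖ x * ε' := by
        rw [intervalIntegral.integral_mul_const]; rfl
    _ < ε := by
        rw [hε'def]
        rw [div_eq_inv_mul, ← mul_assoc]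
        have h9 : GGf p q ‖lam‖ x * (GGf p q ‖lam‖ x + 1)⁻¹ < 1 := by
          rw [mul_inv_lt_iff₀ (by positivity)]
          linarith
        nlinarith
  have h5 : Tendsto (fun N => ∑ n ∈ Finset.range (N+1), polyc p q c lam n x) atTop
      (nhds (c + ∫ s in (0:ℝ)..x, (Amod p q lam s).mulVec (solf p q c lam s))) := by
    rw [show (fun N => ∑ n ∈ Finset.range (N+1), polyc p q c lam n x)
      = fun N => c + ∫ s in (0:ℝ)..x,
          (Amod p q lam s).mulVec (∑ n ∈ Finset.range N, polyc p q c lam n s)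
      from funext h2]
    exact h4
  exact tendsto_nhds_unique h1 h5

include hpm hqm hp hq in
lemma solf_unique (c : VC) (lam : ℂ) (ψ : ℝ → VC) (hψc : Continuous ψ)
    (hψ : ∀ x : ℝ, 0 ≤ x → ψ x = c + ∫ s in (0:ℝ)..x, (Amod p q lam s).mulVec (ψ s)) :
    ∀ x : ℝ, 0 ≤ x → ψ x = solf p q c lam x := by
  intro x hx
  have hR0 : (0:ℝ) ≤ ‖lam‖ := norm_nonneg _
  set θ : ℝ → VC := fun y => ψ y - solf p q c lam y with hθdef
  have hθc : Continuous θ := hψc.sub (solf_cont hpm hqm hp hq c lam)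
  have hθeq : ∀ y : ℝ, 0 ≤ y → θ y = ∫ s in (0:ℝ)..y, (Amod p q lam s).mulVec (θ s) := by
    intro y hy
    have h1 := hψ y hy
    have h2 := solf_eq hpm hqm hp hq c lam hy
    have hIψ : IntervalIntegrable (fun s => (Amod p q lam s).mulVec (ψ s)) volume 0 y :=
      int_mulVec (Amod_meas hpm hqm lam) hψc (mRf_int hp hq hR0) (Amod_bound le_rfl) 0 y
    have hIs : IntervalIntegrable
        (fun s => (Amod p q lam s).mulVec (solf p q c lam s)) volume 0 y :=
      int_mulVec (Amod_meas hpm hqm lam) (solf_cont hpm hqm hp hq c lam)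
        (mRf_int hp hq hR0) (Amod_bound le_rfl) 0 y
    calc θ y = (c + ∫ s in (0:ℝ)..y, (Amod p q lam s).mulVec (ψ s))
        - (c + ∫ s in (0:ℝ)..y, (Amod p q lam s).mulVec (solf p q c lam s)) := by
          rw [hθdef]; simp only; rw [← h1, ← h2]
    _ = ∫ s in (0:ℝ)..y, ((Amod p q lam s).mulVec (ψ s)
          - (Amod p q lam s).mulVec (solf p q c lam s)) := by
        rw [intervalIntegral.integral_sub hIψ hIs]; abel
    _ = ∫ s in (0:ℝ)..y, (Amod p q lam s).mulVec (θ s) := by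
        apply intervalIntegral.integral_congr
        intro s _
        simp only [hθdef, Matrix.mulVec_sub]
  obtain ⟨C, hC⟩ := (isCompact_Icc (a := (0:ℝ)) (b := x)).exists_bound_of_continuousOn
    hθc.continuousOn
  set K := max C 0 with hK
  have hK0 : 0 ≤ K := le_max_right _ _
  have hbound : ∀ n : ℕ, ∀ y ∈ Icc (0:ℝ) x,
      ‖θ y‖ ≤ K * GGf p q ‖lam‖ y ^ n / n.factorial := by
    intro n
    induction n with
    | zero =>
      intro y hy
      simp only [pow_zero, Nat.factorial_zero, Nat.cast_one, mul_one, div_one]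
      exact le_trans (hC y hy) (le_max_left _ _)
    | succ n ih =>
      intro y hy
      rw [hθeq y hy.1]
      exact step_bound hpm hqm hp hq le_rfl hθc hK0 n hy.1
        (fun s hs => ih s ⟨hs.1, le_trans hs.2 hy.2⟩)
  have hlim : Tendsto (fun n : ℕ => K * GGf p q ‖lam‖ x ^ n / n.factorial) atTop (nhds 0) := by
    have := (Real.summable_pow_div_factorial (GGf p q ‖lam‖ x)).tendsto_atTop_zero
    have h2 := this.const_mul K
    simpa [mul_div_assoc] using h2
  have hzero : ‖θ x‖ ≤ 0 := ge_of_tendsto' hlim (fun n => hbound n x ⟨hx, le_rfl⟩)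
  have hθ0 : θ x = 0 := norm_le_zero_iff.1 hzero
  exact sub_eq_zero.1 hθ0

end withPQ4
def e1C : VC := ![1, 0]
def e2C : VC := ![0, 1]

lemma dirac_algebra (p q : ℝ → ℂ) (lam : ℂ) (x : ℝ) (v : VC) :
    BmatC.mulVec ((AmatC p q lam x).mulVec v) + (OmegaC p q x).mulVec v = lam • v := by
  funext i
  fin_cases i <;>
    simp [BmatC, AmatC, OmegaC, Matrix.mulVec, dotProduct, Fin.sum_univ_two,
      Pi.smul_apply, smul_eq_mul] <;> ring

section withPQ5

variable {p q : ℝ → ℂ} (hpm : Measurable p) (hqm : Measurable q)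
    (hp : ∀ a : ℝ, 0 ≤ a → IntegrableOn p (Icc 0 a))
    (hq : ∀ a : ℝ, 0 ≤ a → IntegrableOn q (Icc 0 a))

include hpm hqm hp hq in
lemma solf_linear (c : VC) (lam : ℂ) {x : ℝ} (hx : 0 ≤ x) :
    solf p q c lam x = c 0 • solf p q e1C lam x + c 1 • solf p q e2C lam x := by
  have hc1 : Continuous (solf p q e1C lam) := solf_cont hpm hqm hp hq e1C lam
  have hc2 : Continuous (solf p q e2C lam) := solf_cont hpm hqm hp hq e2C lam
  have hψc : Continuous (fun y => c 0 • solf p q e1C lam y + c 1 • solf p q e2C lam y) :=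
    ((hc1.const_smul (c 0)).add (hc2.const_smul (c 1)))
  refine (solf_unique hpm hqm hp hq c lam _ hψc ?_ x hx).symm
  intro y hy
  have hR0 : (0:ℝ) ≤ ‖lam‖ := norm_nonneg _
  have hI1 : IntervalIntegrable (fun s => (Amod p q lam s).mulVec (solf p q e1C lam s)) volume 0 y :=
    int_mulVec (Amod_meas hpm hqm lam) hc1 (mRf_int hp hq hR0) (Amod_bound le_rfl) 0 y
  have hI2 : IntervalIntegrable (fun s => (Amod p q lam s).mulVec (solf p q e2C lam s)) volume 0 y :=
    int_mulVec (Amod_meas hpm hqm lam) hc2 (mRf_int hp hq hR0) (Amod_bound le_rfl) 0 y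
  have hs1 : IntervalIntegrable (fun s => c 0 • (Amod p q lam s).mulVec (solf p q e1C lam s)) volume 0 y :=
    hI1.smul (c 0)
  have hs2 : IntervalIntegrable (fun s => c 1 • (Amod p q lam s).mulVec (solf p q e2C lam s)) volume 0 y :=
    hI2.smul (c 1)
  have hce : c 0 • e1C + c 1 • e2C = c := by
    funext i; fin_cases i <;> simp [e1C, e2C]
  calc c 0 • solf p q e1C lam y + c 1 • solf p q e2C lam y
      = c 0 • (e1C + ∫ s in (0:ℝ)..y, (Amod p q lam s).mulVec (solf p q e1C lam s))
        + c 1 • (e2C + ∫ s in (0:ℝ)..y, (Amod p q lam s).mulVec (solf p q e2C lam s)) := by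
        rw [← solf_eq hpm hqm hp hq e1C lam hy, ← solf_eq hpm hqm hp hq e2C lam hy]
  _ = (c 0 • e1C + c 1 • e2C)
        + ((c 0 • ∫ s in (0:ℝ)..y, (Amod p q lam s).mulVec (solf p q e1C lam s))
          + (c 1 • ∫ s in (0:ℝ)..y, (Amod p q lam s).mulVec (solf p q e2C lam s))) := by
        rw [smul_add, smul_add]; abel
  _ = c + ∫ s in (0:ℝ)..y, (c 0 • (Amod p q lam s).mulVec (solf p q e1C lam s)
          + c 1 • (Amod p q lam s).mulVec (solf p q e2C lam s)) := by
        rw [hce, ← intervalIntegral.integral_smul, ← intervalIntegral.integral_smul,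
          ← intervalIntegral.integral_add hs1 hs2]
  _ = c + ∫ s in (0:ℝ)..y, (Amod p q lam s).mulVec
          (c 0 • solf p q e1C lam s + c 1 • solf p q e2C lam s) := by
        congr 1
        apply intervalIntegral.integral_congr
        intro s _
        show c 0 • (Amod p q lam s).mulVec (solf p q e1C lam s)
            + c 1 • (Amod p q lam s).mulVec (solf p q e2C lam s)
          = (Amod p q lam s).mulVec (c 0 • solf p q e1C lam s + c 1 • solf p q e2C lam s)
        rw [Matrix.mulVec_add, Matrix.mulVec_smul, Matrix.mulVec_smul]

include hpm hqm hp hq in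
lemma solf_entire (c : VC) {x : ℝ} (hx : 0 ≤ x) (z : ℂ) :
    AnalyticAt ℂ (fun lam => solf p q c lam x) z := by
  set R := ‖z‖ + 1 with hRdef
  have hR0 : (0:ℝ) ≤ R := by positivity
  have hGx : 0 ≤ GGf p q R x := GGf_nonneg hp hq hR0 hx
  have hunif : TendstoUniformlyOn
      (fun N lam => ∑ n ∈ Finset.range N, polyc p q c lam n x)
      (fun lam => solf p q c lam x) atTop (Metric.ball (0:ℂ) R) := by
    apply tendstoUniformlyOn_tsum_nat
      ((Real.summable_pow_div_factorial (GGf p q R x)).mul_left ‖c‖)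
    intro n lam hlam
    have hlamR : ‖lam‖ ≤ R := by
      rw [Metric.mem_ball, dist_zero_right] at hlam
      exact hlam.le
    have h1 := polyc_bound hpm hqm hp hq c hlamR n x hx
    rw [mul_div_assoc] at h1
    exact h1
  have hdiff : ∀ N : ℕ, DifferentiableOn ℂ
      (fun lam => ∑ n ∈ Finset.range N, polyc p q c lam n x) (Metric.ball (0:ℂ) R) := by
    intro N
    apply Differentiable.differentiableOn
    apply Differentiable.fun_sum
    intro n _
    show Differentiable ℂ (fun lam => polyc p q c lam n x)
    simp only [polyc]
    apply Differentiable.fun_sum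
    intro k _
    exact (differentiable_pow k).smul_const (wcoef p q c n k x)
  have hd := hunif.tendstoLocallyUniformlyOn.differentiableOn
    (Eventually.of_forall hdiff) Metric.isOpen_ball
  exact hd.analyticAt (Metric.isOpen_ball.mem_nhds (by
    rw [Metric.mem_ball, dist_zero_right, hRdef]; linarith))

end withPQ5
/-- For measurable, locally integrable `p, q : [0,∞) → ℂ` and any
`λ, α ∈ ℂ` the Cauchy problem for the canonical Dirac system has a unique continuous
solution `φ(·, λ, α)` of the integral equation
`φ(x) = (sin α, -cos α) + ∫₀ˣ A(s,λ) φ(s) ds`; this solution satisfies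
`B φ' + Ω φ = λ φ` almost everywhere on `[0,∞)` with `φ(0) = (sin α, -cos α)`, and
for each fixed `x ≥ 0` both components are entire functions of `(λ, α) ∈ ℂ²`. -/
theorem stmt_0 (p q : ℝ → ℂ) (hpm : Measurable p) (hqm : Measurable q)
    (hp : ∀ a : ℝ, 0 ≤ a → IntegrableOn p (Icc 0 a))
    (hq : ∀ a : ℝ, 0 ≤ a → IntegrableOn q (Icc 0 a)) :
    ∃ φ : ℂ → ℂ → ℝ → (Fin 2 → ℂ),
      (∀ lam α : ℂ,
        ContinuousOn (φ lam α) (Ici 0) ∧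
        (∀ x : ℝ, 0 ≤ x →
          φ lam α x = ![Complex.sin α, -Complex.cos α] +
            ∫ s in (0:ℝ)..x, (AmatC p q lam s).mulVec (φ lam α s)) ∧
        (∀ ψ : ℝ → (Fin 2 → ℂ), ContinuousOn ψ (Ici 0) →
          (∀ x : ℝ, 0 ≤ x → ψ x = ![Complex.sin α, -Complex.cos α] +
            ∫ s in (0:ℝ)..x, (AmatC p q lam s).mulVec (ψ s)) →
          ∀ x : ℝ, 0 ≤ x → ψ x = φ lam α x) ∧
        φ lam α 0 = ![Complex.sin α, -Complex.cos α] ∧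
        (∀ᵐ x ∂(volume.restrict (Ici (0:ℝ))),
          ∃ d : Fin 2 → ℂ, HasDerivAt (φ lam α) d x ∧
            BmatC.mulVec d + (OmegaC p q x).mulVec (φ lam α x) = lam • φ lam α x)) ∧
      (∀ x : ℝ, 0 ≤ x → ∀ i : Fin 2, ∀ z : ℂ × ℂ,
        AnalyticAt ℂ (fun w : ℂ × ℂ => φ w.1 w.2 x i) z) := by
  have hcongr : ∀ (lam : ℂ) (u : ℝ → VC) {x : ℝ}, 0 ≤ x →
      (∫ s in (0:ℝ)..x, (AmatC p q lam s).mulVec (u s))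
        = ∫ s in (0:ℝ)..x, (Amod p q lam s).mulVec (u s) := by
    intro lam u x hx
    apply intervalIntegral.integral_congr
    intro s hs
    rw [uIcc_of_le hx] at hs
    show (AmatC p q lam s).mulVec (u s) = (Amod p q lam s).mulVec (u s)
    have hmem : s ∈ Ici (0:ℝ) := mem_Ici.2 hs.1
    rw [Amod, Set.indicator_of_mem hmem]
  refine ⟨fun lam α x => solf p q ![Complex.sin α, -Complex.cos α] lam x,
    fun lam α => ?_, ?_⟩
  · set c : VC := ![Complex.sin α, -Complex.cos α] with hcdef
    refine ⟨(solf_cont hpm hqm hp hq c lam).continuousOn,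
      fun x hx => ?_, fun ψ hψc hψeq x hx => ?_, solf_nonpos c lam le_rfl, ?_⟩
    · rw [hcongr lam _ hx]
      exact solf_eq hpm hqm hp hq c lam hx
    -- uniqueness
    · set ψt : ℝ → VC := fun y => ψ (max y 0) with hψtdef
      have hψtc : Continuous ψt :=
        hψc.comp_continuous (continuous_id.max continuous_const) (fun y => le_max_right y 0)
      have hψteq : ∀ y : ℝ, 0 ≤ y →
          ψt y = c + ∫ s in (0:ℝ)..y, (Amod p q lam s).mulVec (ψt s) := by
        intro y hy
        have h0 : ψt y = ψ y := by simp only [hψtdef]; rw [max_eq_left hy]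
        rw [h0, hψeq y hy]
        congr 1
        apply intervalIntegral.integral_congr
        intro s hs
        rw [uIcc_of_le hy] at hs
        have h1 : ψt s = ψ s := by simp only [hψtdef]; rw [max_eq_left hs.1]
        show (AmatC p q lam s).mulVec (ψ s) = (Amod p q lam s).mulVec (ψt s)
        have hmem : s ∈ Ici (0:ℝ) := mem_Ici.2 hs.1
        rw [Amod, Set.indicator_of_mem hmem, h1]
      have huniq := solf_unique hpm hqm hp hq c lam ψt hψtc hψteq x hx
      have hxx : ψt x = ψ x := by simp only [hψtdef]; rw [max_eq_left hx]
      rw [← hxx]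
      exact huniq
    -- a.e. derivative
    · set f : ℝ → VC := fun s => (Amod p q lam s).mulVec (solf p q c lam s) with hfdef
      have hR0 : (0:ℝ) ≤ ‖lam‖ := norm_nonneg _
      have hfi : ∀ a b : ℝ, IntervalIntegrable f volume a b := fun a b =>
        int_mulVec (Amod_meas hpm hqm lam) (solf_cont hpm hqm hp hq c lam)
          (mRf_int hp hq hR0) (Amod_bound le_rfl) a b
      have hfloc : LocallyIntegrable f volume := by
        rw [MeasureTheory.locallyIntegrable_iff]
        intro K hK
        obtain ⟨r, hr⟩ := hK.isBounded.subset_closedBall 0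
        set r2 := max r 0 with hr2
        have hr2' : K ⊆ Icc (-r2) r2 := by
          intro y hy
          have := hr hy
          rw [Metric.mem_closedBall, Real.dist_eq, sub_zero] at this
          have h3 := abs_le.1 (le_trans this (le_max_left r 0))
          exact ⟨h3.1, h3.2⟩
        apply IntegrableOn.mono_set _ hr2'
        rw [← intervalIntegrable_iff_integrableOn_Icc_of_le (by
          have : (0:ℝ) ≤ r2 := le_max_right r 0; linarith)]
        exact hfi (-r2) r2
      have hleb := IsUnifLocDoublingMeasure.ae_tendsto_average_norm_sub (μ := volume) hfloc 1
      have hne : ∀ᵐ s ∂(volume : Measure ℝ), s ≠ 0 :=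
        compl_mem_ae_iff.2 Real.volume_singleton
      rw [ae_restrict_iff' measurableSet_Ici]
      filter_upwards [hleb, hne] with x hx1 hx2 hx3
      have hxpos : 0 < x := lt_of_le_of_ne hx3 (Ne.symm hx2)
      have htend : Tendsto (fun r => ⨍ y in Metric.closedBall x r, ‖f y - f x‖)
          (nhdsWithin 0 (Ioi 0)) (nhds 0) := by
        apply hx1 (fun _ => x) id tendsto_id
        filter_upwards [self_mem_nhdsWithin] with r hr
        simp only [Metric.mem_closedBall, dist_self, one_mul]
        exact le_of_lt hr
      have hprim := hasDerivAt_primitive_of_leb f hfi htend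
      have hF : HasDerivAt (fun y => c + ∫ t in (0:ℝ)..y, f t) (f x) x := hprim.const_add c
      have hev : (fun y => solf p q c lam y) =ᶠ[nhds x] (fun y => c + ∫ t in (0:ℝ)..y, f t) := by
        filter_upwards [isOpen_Ioi.mem_nhds hxpos] with y hy
        exact solf_eq hpm hqm hp hq c lam (le_of_lt hy)
      refine ⟨f x, hF.congr_of_eventuallyEq hev, ?_⟩
      have hfx : f x = (AmatC p q lam x).mulVec (solf p q c lam x) := by
        simp only [hfdef]
        rw [Amod, Set.indicator_of_mem hx3]
      rw [hfx]
      exact dirac_algebra p q lam x _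
  -- analyticity
  · intro x hx i z
    show AnalyticAt ℂ
      (fun w : ℂ × ℂ => solf p q ![Complex.sin w.2, -Complex.cos w.2] w.1 x i) z
    have hEq : (fun w : ℂ × ℂ => solf p q ![Complex.sin w.2, -Complex.cos w.2] w.1 x i)
        = fun w : ℂ × ℂ => Complex.sin w.2 * solf p q e1C w.1 x i
            + (-Complex.cos w.2) * solf p q e2C w.1 x i := by
      funext w
      rw [solf_linear hpm hqm hp hq _ w.1 hx]
      simp [e1C, e2C]
    rw [hEq]
    have hproj : ∀ (v : VC), AnalyticAt ℂ (fun u : VC => u i) v :=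
      fun v => (ContinuousLinearMap.proj i : (Fin 2 → ℂ) →L[ℂ] ℂ).analyticAt v
    have hproj1 : AnalyticAt ℂ (fun lam => solf p q e1C lam x i) z.1 :=
      (hproj _).comp (solf_entire hpm hqm hp hq e1C hx z.1)
    have hproj2 : AnalyticAt ℂ (fun lam => solf p q e2C lam x i) z.1 :=
      (hproj _).comp (solf_entire hpm hqm hp hq e2C hx z.1)
    apply AnalyticAt.add
    · exact ((Complex.differentiable_sin.analyticAt z.2).comp analyticAt_snd).mul
        (hproj1.comp analyticAt_fst)
    · exact (((Complex.differentiable_cos.analyticAt z.2).comp analyticAt_snd).neg).mul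
        (hproj2.comp analyticAt_fst)
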